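/- Explicit presentation transfer: let R be a commutative ring, X and X̃ types, P an R-algebra, π : FreeAlgebra R X → P and π̃ : FreeAlgebra R X̃ → P surjective R-algebra homomorphisms, and φ : FreeAlgebra R X → FreeAlgebra R X̃, φ̃ : FreeAlgebra R X̃ → FreeAlgebra R X R-algebra homomorphisms satisfying π̃ ∘ φ = π and π ∘ φ̃ = π̃. If the kernel of π̃ equals the two-sided ideal generated by a subset R̃ ⊆ FreeAlgebra R X̃, then the kernel of π equals the two-sided ideal generated by the set φ̃(R̃) ∪ { ι(x) - φ̃(φ(ι(x))) : x ∈ X }. -/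
import Mathlib

/-- Explicit presentation transfer: if `ker π̃` is the two-sided ideal generated by `R̃`,
then `ker π` is the two-sided ideal generated by `φ̃(R̃) ∪ {ι x - φ̃(φ(ι x))}`. -/
theorem presentation_transfer
    (R : Type*) [CommRing R] (X Xt : Type*) (P : Type*) [Ring P] [Algebra R P]
    (π : FreeAlgebra R X →ₐ[R] P) (πt : FreeAlgebra R Xt →ₐ[R] P)
    (hπ : Function.Surjective π) (hπt : Function.Surjective πt)
    (φ : FreeAlgebra R X →ₐ[R] FreeAlgebra R Xt)
    (φt : FreeAlgebra R Xt →ₐ[R] FreeAlgebra R X)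
    (hφ : πt.comp φ = π) (hφt : π.comp φt = πt)
    (Rt : Set (FreeAlgebra R Xt))
    (hker : TwoSidedIdeal.ker πt = TwoSidedIdeal.span Rt) :
    TwoSidedIdeal.ker π =
      TwoSidedIdeal.span
        (φt '' Rt ∪
          {a : FreeAlgebra R X | ∃ x : X,
            a = FreeAlgebra.ι R x - φt (φ (FreeAlgebra.ι R x))}) := by
  set S : Set (FreeAlgebra R X) :=
    φt '' Rt ∪
      {a : FreeAlgebra R X | ∃ x : X,
        a = FreeAlgebra.ι R x - φt (φ (FreeAlgebra.ι R x))} with hS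
  set I := TwoSidedIdeal.span S with hI
  have hφ' : ∀ a, πt (φ a) = π a := fun a => congrFun (congrArg DFunLike.coe hφ) a
  have hφt' : ∀ a, π (φt a) = πt a := fun a => congrFun (congrArg DFunLike.coe hφt) a
  have hSker : S ⊆ (TwoSidedIdeal.ker π : Set (FreeAlgebra R X)) := by
    rintro a (⟨r, hr, rfl⟩ | ⟨x, rfl⟩)
    · rw [SetLike.mem_coe, TwoSidedIdeal.mem_ker, hφt']
      have : r ∈ TwoSidedIdeal.ker πt := hker ▸ TwoSidedIdeal.subset_span hr
      exact (TwoSidedIdeal.mem_ker πt).mp this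
    · rw [SetLike.mem_coe, TwoSidedIdeal.mem_ker, map_sub, hφt', hφ', sub_self]
  -- key: for every a, a - φt (φ a) ∈ I
  have key : ∀ a : FreeAlgebra R X, a - φt (φ a) ∈ I := by
    intro a
    induction a with
    | grade0 r => simp [AlgHom.commutes]
    | grade1 x => exact TwoSidedIdeal.subset_span (Or.inr ⟨x, rfl⟩)
    | mul a b ha hb =>
        have : a * b - φt (φ (a * b)) =
            (a - φt (φ a)) * b + φt (φ a) * (b - φt (φ b)) := by
          simp [mul_sub, sub_mul]
        rw [this]
        exact I.add_mem (I.mul_mem_right _ _ ha) (I.mul_mem_left _ _ hb)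
    | add a b ha hb =>
        have : a + b - φt (φ (a + b)) = (a - φt (φ a)) + (b - φt (φ b)) := by
          rw [map_add, map_add]; abel
        rw [this]
        exact I.add_mem ha hb
  apply le_antisymm
  · intro a ha
    have h1 : φ a ∈ TwoSidedIdeal.span Rt := by
      rw [← hker, TwoSidedIdeal.mem_ker, hφ']
      exact (TwoSidedIdeal.mem_ker π).mp ha
    have h2 : φt (φ a) ∈ I := by
      have := TwoSidedIdeal.mem_span_iff.mp h1 (I.comap (φt : FreeAlgebra R Xt →+* FreeAlgebra R X))
        (fun r hr => (TwoSidedIdeal.mem_comap (φt : FreeAlgebra R Xt →+* FreeAlgebra R X)).mpr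
          (TwoSidedIdeal.subset_span (Or.inl ⟨r, hr, rfl⟩)))
      exact (TwoSidedIdeal.mem_comap (φt : FreeAlgebra R Xt →+* FreeAlgebra R X)).mp this
    have : a = (a - φt (φ a)) + φt (φ a) := by abel
    rw [this]
    exact I.add_mem (key a) h2
  · intro a ha
    exact TwoSidedIdeal.mem_span_iff.mp ha _ hSker
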